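/- Let f : R → S be a ring homomorphism such that the chain map lifting problem has a positive solution: for every pair X, Y of bounded complexes of finitely generated projective R-modules and every chain map α : X ⊗_R S → Y ⊗_R S in K^b(S), there exist maps φ : X' → X and α' : X' → Y in K^b(R) with φ ⊗_R S invertible and α = (α' ⊗_R S) ∘ (φ ⊗_R S)^{-1}. Then the chain complex lifting problem has a positive solution: every complex Y in K^b(S) whose terms are of the form P^i ⊗_R S for finitely generated projective R-modules P^i is isomorphic in K^b(S) to X ⊗_R S for some X in K^b(R). -/

import Mathlib

open CategoryTheory CategoryTheory.Limits

universe u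

/-- A bounded complex of finitely generated projective modules. -/
def IsKb {R : Type u} [CommRing R] (X : CochainComplex (ModuleCat.{u} R) ℤ) : Prop :=
  (∀ i : ℤ, Module.Finite R (X.X i) ∧ Projective (X.X i)) ∧
  ∃ m n : ℤ, ∀ i : ℤ, (i < m ∨ n < i) → IsZero (X.X i)

section Helpers

variable {R : Type u} [CommRing R]

lemma finite_of_iso {M N : ModuleCat.{u} R} (h : M ≅ N) (hM : Module.Finite R M) :
    Module.Finite R N := Module.Finite.equiv h.toLinearEquiv

lemma finite_of_isZero {M : ModuleCat.{u} R} (h : IsZero M) : Module.Finite R M :=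
  finite_of_iso ((ModuleCat.isZero_of_subsingleton (ModuleCat.of R PUnit)).iso h)
    (inferInstance : Module.Finite R PUnit.{u+1})

lemma projective_of_isZero {M : ModuleCat.{u} R} (h : IsZero M) : Projective M :=
  Projective.of_iso ((isZero_zero _).iso h) inferInstance

lemma isZero_biprod {C : Type*} [Category C] [Preadditive C] {A B : C} [HasBinaryBiproduct A B]
    (hA : IsZero A) (hB : IsZero B) : IsZero (A ⊞ B) := by
  rw [IsZero.iff_id_eq_zero]
  apply biprod.hom_ext
  · exact hA.eq_of_tgt _ _
  · exact hB.eq_of_tgt _ _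

lemma isZero_cx {C : Type*} [Category C] [Preadditive C] {ι : Type*} {c : ComplexShape ι}
    {K : HomologicalComplex C c} (h : ∀ i, IsZero (K.X i)) : IsZero K := by
  rw [IsZero.iff_id_eq_zero]
  ext i
  exact (h i).eq_of_src _ _

end Helpers

section Key

variable {R S : Type u} [CommRing R] [CommRing S]

lemma key (T : ModuleCat.{u} R ⥤ ModuleCat.{u} S) [T.Additive]
    (hlift : ∀ (X Y : CochainComplex (ModuleCat.{u} R) ℤ), IsKb X → IsKb Y →
      ∀ α : (T.mapHomotopyCategory (ComplexShape.up ℤ)).obj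
              ((HomotopyCategory.quotient _ _).obj X) ⟶
            (T.mapHomotopyCategory (ComplexShape.up ℤ)).obj
              ((HomotopyCategory.quotient _ _).obj Y),
        ∃ (X' : CochainComplex (ModuleCat.{u} R) ℤ) (_ : IsKb X')
          (φ : (HomotopyCategory.quotient _ _).obj X' ⟶ (HomotopyCategory.quotient _ _).obj X)
          (α' : (HomotopyCategory.quotient _ _).obj X' ⟶ (HomotopyCategory.quotient _ _).obj Y),
          IsIso ((T.mapHomotopyCategory (ComplexShape.up ℤ)).map φ) ∧
          (T.mapHomotopyCategory (ComplexShape.up ℤ)).map φ ≫ α =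
            (T.mapHomotopyCategory (ComplexShape.up ℤ)).map α')
    (k : ℕ) :
    ∀ (Y : CochainComplex (ModuleCat.{u} S) ℤ) (m n : ℤ),
      (∀ i : ℤ, (i < m ∨ n < i) → IsZero (Y.X i)) → n < m + k →
      (∀ i : ℤ, ∃ P : ModuleCat.{u} R, Module.Finite R P ∧ Projective P ∧
        Nonempty (Y.X i ≅ T.obj P)) →
      ∃ X : CochainComplex (ModuleCat.{u} R) ℤ, IsKb X ∧
        Nonempty ((T.mapHomotopyCategory (ComplexShape.up ℤ)).obj
            ((HomotopyCategory.quotient _ _).obj X) ≅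
          (HomotopyCategory.quotient _ _).obj Y) := by
  induction k with
  | zero =>
    intro Y m n hsupp hk _
    have hYzero : ∀ i, IsZero (Y.X i) := by
      intro i
      apply hsupp
      omega
    set Z : CochainComplex (ModuleCat.{u} R) ℤ :=
      (HomologicalComplex.single (ModuleCat.{u} R) (ComplexShape.up ℤ) 0).obj
        (ModuleCat.of R PUnit) with hZ
    have hZzero : ∀ i, IsZero (Z.X i) := by
      intro i
      by_cases hi : i = 0
      · subst hi
        exact IsZero.of_iso (ModuleCat.isZero_of_subsingleton _)
          (HomologicalComplex.singleObjXSelf (ComplexShape.up ℤ) 0 (ModuleCat.of R PUnit))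
      · exact HomologicalComplex.isZero_single_obj_X _ _ _ _ hi
    refine ⟨Z, ⟨fun i => ⟨finite_of_isZero (hZzero i), projective_of_isZero (hZzero i)⟩,
      0, 0, fun i _ => hZzero i⟩, ⟨?_⟩⟩
    have h1 : IsZero ((HomotopyCategory.quotient (ModuleCat.{u} S) (ComplexShape.up ℤ)).obj
        ((T.mapHomologicalComplex (ComplexShape.up ℤ)).obj Z)) :=
      Functor.map_isZero _ (isZero_cx (fun i => Functor.map_isZero T (hZzero i)))
    have h2 : IsZero ((HomotopyCategory.quotient (ModuleCat.{u} S) (ComplexShape.up ℤ)).obj Y) :=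
      Functor.map_isZero _ (isZero_cx hYzero)
    exact h1.iso h2
  | succ k ih =>
    intro Y m n hsupp hk hext
    classical
    set e := ComplexShape.embeddingUpIntLE (n-1) with he
    set B : CochainComplex (ModuleCat.{u} S) ℤ := (Y.restriction e).extend e with hB
    have hBzero : ∀ i : ℤ, n - 1 < i → IsZero (B.X i) := by
      intro i hi
      apply (Y.restriction e).isZero_extend_X e i
      intro kk hkk
      simp only [he, ComplexShape.embeddingUpIntLE_f] at hkk
      omega
    -- the single complex A at degree n
    set A : CochainComplex (ModuleCat.{u} S) ℤ :=
      (HomologicalComplex.single (ModuleCat.{u} S) (ComplexShape.up ℤ) n).obj (Y.X n) with hA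
    set ιA : A ⟶ Y := HomologicalComplex.mkHomFromSingle (𝟙 (Y.X n)) (by
      intro i hi
      apply (hsupp i _).eq_of_tgt
      right
      simp only [ComplexShape.up_Rel] at hi
      omega) with hιA
    -- the projection π : Y ⟶ B
    have haslift : e.HasLift (𝟙 (Y.restriction e)) := by
      intro j hj i' hrel
      exfalso
      exact hj.2 (j + 1) (by
        simp only [he, ComplexShape.embeddingUpIntLE_f, ComplexShape.up_Rel]
        push_cast
        omega)
    set π : Y ⟶ B := e.liftExtend (𝟙 (Y.restriction e)) haslift with hπ
    have hπiso : ∀ (kk : ℕ) (i : ℤ), e.f kk = i → IsIso (π.f i) := by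
      intro kk i hkk
      rw [hπ, e.isIso_liftExtend_f_iff _ _ hkk]
      dsimp
      infer_instance
    have hzero : ιA ≫ π = 0 := by
      apply HomologicalComplex.hom_ext
      intro i
      by_cases hi : i = n
      · exact (hBzero i (by omega)).eq_of_tgt _ _
      · exact (HomologicalComplex.isZero_single_obj_X (ComplexShape.up ℤ) n (Y.X n) i hi).eq_of_src _ _
    set S₀ : ShortComplex (CochainComplex (ModuleCat.{u} S) ℤ) := ShortComplex.mk ιA π hzero with hS₀
    -- splittings
    have hιAn : IsIso (ιA.f n) := by
      rw [hιA, HomologicalComplex.mkHomFromSingle_f]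
      infer_instance
    set σ : ∀ i : ℤ, ((S₀.map (HomologicalComplex.eval _ _ i)).Splitting) := fun i =>
      if hi : i = n then by
        letI : IsIso (ιA.f i) := by subst hi; exact hιAn
        exact
        { r := @CategoryTheory.inv _ _ _ _ (ιA.f i) this
          s := 0
          f_r := @IsIso.hom_inv_id _ _ _ _ (ιA.f i) this
          s_g := (hBzero i (by omega)).eq_of_tgt _ _
          id := by
            show CategoryTheory.inv (ιA.f i) ≫ ιA.f i + π.f i ≫ (0 : B.X i ⟶ Y.X i) = 𝟙 (Y.X i)
            simp }
      else by
        haveI hYB : IsIso (π.f i) := by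
          by_cases hile : i ≤ n - 1
          · exact hπiso (n - 1 - i).toNat i (by
              simp only [he, ComplexShape.embeddingUpIntLE_f]; omega)
          · refine ⟨0, ?_, ?_⟩
            · exact (hsupp i (by omega)).eq_of_src _ _
            · exact (hBzero i (by omega)).eq_of_src _ _
        exact
        { r := 0
          s := @CategoryTheory.inv _ _ _ _ (π.f i) hYB
          f_r := ((HomologicalComplex.isZero_single_obj_X (ComplexShape.up ℤ) n (Y.X n) i
              hi).eq_of_src _ _)
          s_g := @IsIso.inv_hom_id _ _ _ _ (π.f i) hYB
          id := by
            show (0 : Y.X i ⟶ A.X i) ≫ ιA.f i + π.f i ≫ CategoryTheory.inv (π.f i) = 𝟙 (Y.X i)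
            simp }
    -- the connecting map and the cone identification
    set w : B ⟶ A⟦(1:ℤ)⟧ := CochainComplex.homOfDegreewiseSplit S₀ σ with hw
    have coneIso : CochainComplex.mappingCone w ≅ Y⟦(1:ℤ)⟧ :=
      CochainComplex.mappingConeHomOfDegreewiseSplitIso S₀ σ
    -- lift of A⟦1⟧
    obtain ⟨Pn, hPnfin, hPnproj, ⟨ePn⟩⟩ := hext n
    set XA : CochainComplex (ModuleCat.{u} R) ℤ :=
      (HomologicalComplex.single (ModuleCat.{u} R) (ComplexShape.up ℤ) (n-1)).obj Pn with hXA
    have hKbXA : IsKb XA := by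
      constructor
      · intro i
        by_cases hi : i = n - 1
        · subst hi
          have h := (HomologicalComplex.singleObjXSelf (ComplexShape.up ℤ) (n-1) Pn).symm
          exact ⟨finite_of_iso h hPnfin, Projective.of_iso h.symm.symm hPnproj⟩
        · have h := HomologicalComplex.isZero_single_obj_X (ComplexShape.up ℤ) (n-1) Pn i hi
          exact ⟨finite_of_isZero h, projective_of_isZero h⟩
      · exact ⟨n-1, n-1, fun i hi =>
          HomologicalComplex.isZero_single_obj_X (ComplexShape.up ℤ) (n-1) Pn i (by omega)⟩
    have eAcx : (T.mapHomologicalComplex (ComplexShape.up ℤ)).obj XA ≅ A⟦(1:ℤ)⟧ :=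
      (HomologicalComplex.singleMapHomologicalComplex T (ComplexShape.up ℤ) (n-1)).app Pn ≪≫
      (HomologicalComplex.single (ModuleCat.{u} S) (ComplexShape.up ℤ) (n-1)).mapIso ePn.symm ≪≫
      ((CochainComplex.singleFunctors (ModuleCat.{u} S)).shiftIso 1 (n-1) n
        (by ring)).symm.app (Y.X n)
    have eA : (T.mapHomotopyCategory (ComplexShape.up ℤ)).obj
        ((HomotopyCategory.quotient _ _).obj XA) ≅
        (HomotopyCategory.quotient _ _).obj (A⟦(1:ℤ)⟧) :=
      (HomotopyCategory.quotient _ _).mapIso eAcx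
    -- lift of B by the induction hypothesis
    have hBX : ∀ i : ℤ, i ≤ n - 1 → Nonempty (B.X i ≅ Y.X i) := by
      intro i hi
      have h : e.f ((n - 1 - i).toNat) = i := by
        simp only [he, ComplexShape.embeddingUpIntLE_f]
        omega
      exact ⟨(Y.restriction e).extendXIso e h ≪≫ Y.restrictionXIso e h⟩
    have hBsupp : ∀ i : ℤ, (i < m ∨ n - 1 < i) → IsZero (B.X i) := by
      intro i hi
      by_cases hile : i ≤ n - 1
      · obtain ⟨ci⟩ := hBX i hile
        exact IsZero.of_iso (hsupp i (by omega)) ci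
      · exact hBzero i (by omega)
    have hBext : ∀ i : ℤ, ∃ P : ModuleCat.{u} R, Module.Finite R P ∧ Projective P ∧
        Nonempty (B.X i ≅ T.obj P) := by
      intro i
      by_cases hile : i ≤ n - 1
      · obtain ⟨P, h1, h2, ⟨h3⟩⟩ := hext i
        obtain ⟨ci⟩ := hBX i hile
        exact ⟨P, h1, h2, ⟨ci ≪≫ h3⟩⟩
      · exact ⟨ModuleCat.of R PUnit, inferInstance,
          Projective.of_iso ((isZero_zero _).iso (ModuleCat.isZero_of_subsingleton _))
            inferInstance,
          ⟨(hBzero i (by omega)).iso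
            (Functor.map_isZero T (ModuleCat.isZero_of_subsingleton _))⟩⟩
    obtain ⟨XB, hXB, ⟨eB⟩⟩ := ih B m (n-1) hBsupp (by omega) hBext
    -- lift the connecting map
    obtain ⟨X', hX', φ, α', hφiso, hcomm⟩ := hlift XB XA hXB hKbXA
      (eB.hom ≫ (HomotopyCategory.quotient _ _).map w ≫ eA.inv)
    obtain ⟨g, hg⟩ := (HomotopyCategory.quotient _ _).map_surjective α'
    -- the two distinguished mapping cone triangles
    have dist₁ := HomotopyCategory.mappingCone_triangleh_distinguished
      ((T.mapHomologicalComplex (ComplexShape.up ℤ)).map g)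
    have dist₂ := HomotopyCategory.mappingCone_triangleh_distinguished w
    have comm : (CochainComplex.mappingCone.triangleh
          ((T.mapHomologicalComplex (ComplexShape.up ℤ)).map g)).mor₁ ≫ eA.hom =
        (@asIso _ _ _ _ ((T.mapHomotopyCategory (ComplexShape.up ℤ)).map φ) hφiso ≪≫ eB).hom ≫
          (CochainComplex.mappingCone.triangleh w).mor₁ := by
      have h1 : (HomotopyCategory.quotient (ModuleCat.{u} S) (ComplexShape.up ℤ)).map
          ((T.mapHomologicalComplex (ComplexShape.up ℤ)).map g) =
          (T.mapHomotopyCategory (ComplexShape.up ℤ)).map α' := by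
        rw [← hg]
        rfl
      dsimp
      show (HomotopyCategory.quotient _ _).map ((T.mapHomologicalComplex (ComplexShape.up ℤ)).map g) ≫ eA.hom =
        ((T.mapHomotopyCategory (ComplexShape.up ℤ)).map φ ≫ eB.hom) ≫ (HomotopyCategory.quotient _ _).map w
      rw [h1, ← hcomm]
      show ((T.mapHomotopyCategory (ComplexShape.up ℤ)).map φ ≫ eB.hom ≫
          (HomotopyCategory.quotient _ _).map w ≫ eA.inv) ≫ eA.hom =
        ((T.mapHomotopyCategory (ComplexShape.up ℤ)).map φ ≫ eB.hom) ≫ (HomotopyCategory.quotient _ _).map w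
      simp
    have τ := Pretriangulated.isoTriangleOfIso₁₂ _ _ dist₁ dist₂
      (@asIso _ _ _ _ ((T.mapHomotopyCategory (ComplexShape.up ℤ)).map φ) hφiso ≪≫ eB) eA comm
    have e₃ := Pretriangulated.Triangle.π₃.mapIso τ
    have e₄ := Pretriangulated.Triangle.π₃.mapIso (CochainComplex.mappingCone.mapTrianglehIso g T)
    -- assemble
    set X₁ : CochainComplex (ModuleCat.{u} R) ℤ := CochainComplex.mappingCone g with hX₁
    have e₅ : (T.mapHomotopyCategory (ComplexShape.up ℤ)).obj
        ((HomotopyCategory.quotient _ _).obj X₁) ≅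
        (HomotopyCategory.quotient _ _).obj (Y⟦(1:ℤ)⟧) :=
      e₄ ≪≫ e₃ ≪≫ (HomotopyCategory.quotient _ _).mapIso coneIso
    -- IsKb of the mapping cone
    obtain ⟨hX'fp, m', n', hX'b⟩ := hX'
    have coneX : ∀ i : ℤ, Nonempty (X₁.X i ≅ (X'.X (i+1)) ⊞ (XA.X i)) := fun i =>
      ⟨HomologicalComplex.homotopyCofiber.XIsoBiprod g i (i+1) (by simp)⟩
    have hKbX₁ : IsKb X₁ := by
      constructor
      · intro i
        obtain ⟨ci⟩ := coneX i
        constructor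
        · refine finite_of_iso (ci ≪≫ ModuleCat.biprodIsoProd _ _).symm ?_
          haveI h1 := (hX'fp (i+1)).1
          haveI h2 := (hKbXA.1 i).1
          exact Module.Finite.prod
        · refine Projective.of_iso ci.symm ?_
          haveI h1 := (hX'fp (i+1)).2
          haveI h2 := (hKbXA.1 i).2
          infer_instance
      · refine ⟨min (m'-1) (n-2), max n' (n-1), fun i hi => ?_⟩
        obtain ⟨ci⟩ := coneX i
        refine IsZero.of_iso ?_ ci
        apply isZero_biprod
        · exact hX'b (i+1) (by omega)
        · exact HomologicalComplex.isZero_single_obj_X (ComplexShape.up ℤ) (n-1) Pn i (by omega)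
    -- unshift
    set X₀ : CochainComplex (ModuleCat.{u} R) ℤ := X₁⟦(-1:ℤ)⟧ with hX₀
    have hKbX₀ : IsKb X₀ := by
      obtain ⟨hfp, m₁, n₁, hb⟩ := hKbX₁
      exact ⟨fun i => hfp (i + (-1)), m₁ + 1, n₁ + 1, fun i hi => hb (i + (-1)) (by omega)⟩
    refine ⟨X₀, hKbX₀, ⟨?_⟩⟩
    exact (T.mapHomotopyCategory (ComplexShape.up ℤ)).mapIso
        (((HomotopyCategory.quotient _ _).commShiftIso (-1:ℤ)).app X₁) ≪≫
      ((T.mapHomotopyCategory (ComplexShape.up ℤ)).commShiftIso (-1:ℤ)).app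
        ((HomotopyCategory.quotient _ _).obj X₁) ≪≫
      (shiftFunctor (HomotopyCategory (ModuleCat.{u} S) (ComplexShape.up ℤ)) (-1:ℤ)).mapIso e₅ ≪≫
      (((HomotopyCategory.quotient _ _).commShiftIso (-1:ℤ)).app (Y⟦(1:ℤ)⟧)).symm ≪≫
      (HomotopyCategory.quotient _ _).mapIso
        ((shiftFunctorCompIsoId (CochainComplex (ModuleCat.{u} S) ℤ) (1:ℤ) (-1:ℤ)
          (by ring)).app Y)

end Key

/-- If the chain map lifting problem for `f : R → S` has a positive solution, then the chain
complex lifting problem has a positive solution: every bounded complex over `S` whose terms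
are extended from finitely generated projective `R`-modules is, up to isomorphism in
`K^b(S)`, extended from a bounded complex of finitely generated projectives over `R`. -/
theorem stmt12 {R S : Type u} [CommRing R] [CommRing S] (f : R →+* S)
    (T : ModuleCat.{u} R ⥤ ModuleCat.{u} S)
    (hT : T = ModuleCat.extendScalars f) [T.Additive]
    (hlift : ∀ (X Y : CochainComplex (ModuleCat.{u} R) ℤ), IsKb X → IsKb Y →
      ∀ α : (T.mapHomotopyCategory (ComplexShape.up ℤ)).obj
              ((HomotopyCategory.quotient _ _).obj X) ⟶
            (T.mapHomotopyCategory (ComplexShape.up ℤ)).obj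
              ((HomotopyCategory.quotient _ _).obj Y),
        ∃ (X' : CochainComplex (ModuleCat.{u} R) ℤ) (_ : IsKb X')
          (φ : (HomotopyCategory.quotient _ _).obj X' ⟶ (HomotopyCategory.quotient _ _).obj X)
          (α' : (HomotopyCategory.quotient _ _).obj X' ⟶ (HomotopyCategory.quotient _ _).obj Y),
          IsIso ((T.mapHomotopyCategory (ComplexShape.up ℤ)).map φ) ∧
          (T.mapHomotopyCategory (ComplexShape.up ℤ)).map φ ≫ α =
            (T.mapHomotopyCategory (ComplexShape.up ℤ)).map α') :
    ∀ Y : CochainComplex (ModuleCat.{u} S) ℤ,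
      (∃ m n : ℤ, ∀ i : ℤ, (i < m ∨ n < i) → IsZero (Y.X i)) →
      (∀ i : ℤ, ∃ P : ModuleCat.{u} R, Module.Finite R P ∧ Projective P ∧
        Nonempty (Y.X i ≅ T.obj P)) →
      ∃ X : CochainComplex (ModuleCat.{u} R) ℤ, IsKb X ∧
        Nonempty ((T.mapHomotopyCategory (ComplexShape.up ℤ)).obj
            ((HomotopyCategory.quotient _ _).obj X) ≅
          (HomotopyCategory.quotient _ _).obj Y) := by
  intro Y hb hext
  obtain ⟨m, n, hmn⟩ := hb
  refine key T hlift (n + 1 - m).toNat Y m n hmn ?_ hext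
  have := Int.self_le_toNat (n + 1 - m)
  omega
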